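/- Let J be a real-rooted polynomial of degree d with positive leading coefficient, all roots in [-1,0], and largest root z_d. Then for 0 < θ < 1/n (n ≥ d), J(z_d + θ) ≤ C(n,d) · d · θ · e, where C(n,d) is the leading coefficient bound; consequently for ε > 0, the largest root of J(t) - ε exceeds z_d + ε/(C(n,d)·d·e) whenever ε is small enough. -/

import Mathlib

open Polynomial

lemma multiset_prod_le_aux (b : ℝ) (hb : 0 ≤ b) :
    ∀ t : Multiset ℝ, (∀ a ∈ t, 0 ≤ a ∧ a ≤ b) →
      0 ≤ t.prod ∧ t.prod ≤ b ^ Multiset.card t := by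
  intro t
  induction t using Multiset.induction with
  | empty => simp
  | cons a s ih =>
    intro h
    obtain ⟨ha0, hab⟩ := h a (Multiset.mem_cons_self a s)
    obtain ⟨hs0, hsb⟩ := ih (fun x hx => h x (Multiset.mem_cons_of_mem hx))
    simp only [Multiset.prod_cons, Multiset.card_cons, pow_succ']
    constructor
    · exact mul_nonneg ha0 hs0
    · exact mul_le_mul hab hsb hs0 hb

/-- Let `J` be real-rooted of degree `d ≤ n` with positive leading coefficient bounded by
`C(n,d)`, all roots in `[-1,0]`, and largest root `zd`. Then for `0 < θ < 1/n` one has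
`J(zd + θ) ≤ C(n,d)·d·θ·e`, and consequently for every small enough `ε > 0` the largest
root of `J - ε` is at least `zd + ε/(C(n,d)·d·e)`. -/
theorem jacobi_value_and_root_shift (n d : ℕ) (hd : 1 ≤ d) (hdn : d ≤ n)
    (J : Polynomial ℝ) (hsplit : J.Splits) (hdeg : J.natDegree = d)
    (hlead : 0 < J.leadingCoeff) (hleadle : J.leadingCoeff ≤ (n.choose d : ℝ))
    (hroots : ∀ x : ℝ, J.IsRoot x → -1 ≤ x ∧ x ≤ 0)
    (zd : ℝ) (hzd : J.IsRoot zd) (hzdmax : ∀ x : ℝ, J.IsRoot x → x ≤ zd) :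
    (∀ θ : ℝ, 0 < θ → θ < 1 / (n : ℝ) →
        J.eval (zd + θ) ≤ (n.choose d : ℝ) * d * θ * Real.exp 1) ∧
    (∀ ε : ℝ, 0 < ε → ε < (n.choose d : ℝ) * d * Real.exp 1 / (n : ℝ) →
      ∀ μ : ℝ, (J - C ε).IsRoot μ → (∀ y : ℝ, (J - C ε).IsRoot y → y ≤ μ) →
        μ ≥ zd + ε / ((n.choose d : ℝ) * d * Real.exp 1)) := by
  have hn1 : 1 ≤ n := le_trans hd hdn
  have hnR : (0:ℝ) < n := by exact_mod_cast hn1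
  have hJne : J ≠ 0 := fun h => by simp [h] at hlead
  have hC1 : (1:ℝ) ≤ (n.choose d : ℝ) := by
    exact_mod_cast Nat.one_le_iff_ne_zero.mpr (Nat.choose_pos hdn).ne'
  have hdR : (1:ℝ) ≤ (d:ℝ) := by exact_mod_cast hd
  have hcard : Multiset.card J.roots = d := by
    rw [← hdeg]; exact splits_iff_card_roots.mp hsplit
  have hzdmem : zd ∈ J.roots := by rw [mem_roots hJne]; exact hzd
  have hzd0 : zd ≤ 0 := (hroots zd hzd).2
  have part1 : ∀ θ : ℝ, 0 < θ → θ < 1 / (n : ℝ) →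
      J.eval (zd + θ) ≤ (n.choose d : ℝ) * d * θ * Real.exp 1 := by
    intro θ hθ hθn
    set t := J.roots.erase zd with ht
    have hcons : zd ::ₘ t = J.roots := Multiset.cons_erase hzdmem
    have hcardt : Multiset.card t = d - 1 := by
      have h := congrArg Multiset.card hcons
      rw [Multiset.card_cons, hcard] at h
      omega
    have heval : J.eval (zd + θ) =
        J.leadingCoeff * ((J.roots.map (fun z => zd + θ - z)).prod) := by
      conv_lhs => rw [Splits.eq_prod_roots hsplit]
      simp [eval_multiset_prod, Multiset.map_map, Function.comp]
    have hprodsplit : (J.roots.map (fun z => zd + θ - z)).prod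
        = θ * ((t.map (fun z => zd + θ - z)).prod) := by
      rw [← hcons]; simp
    have hbounds : ∀ a ∈ t.map (fun z => zd + θ - z), 0 ≤ a ∧ a ≤ 1 + θ := by
      intro a ha
      obtain ⟨z, hz, rfl⟩ := Multiset.mem_map.mp ha
      have hzr : J.IsRoot z := (mem_roots hJne).mp (Multiset.mem_of_mem_erase hz)
      have h1 := (hroots z hzr).1
      have h2 := hzdmax z hzr
      constructor <;> linarith
    obtain ⟨hP0, hPle⟩ := multiset_prod_le_aux (1 + θ) (by linarith)
      (t.map (fun z => zd + θ - z)) hbounds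
    rw [Multiset.card_map, hcardt] at hPle
    have hpow : (1 + θ) ^ (d - 1) ≤ Real.exp 1 := by
      have h1 : (1 + θ) ^ (d - 1) ≤ Real.exp θ ^ (d - 1) := by
        apply pow_le_pow_left₀ (by linarith)
        linarith [Real.add_one_le_exp θ]
      have h2 : Real.exp θ ^ (d - 1) = Real.exp (((d - 1 : ℕ) : ℝ) * θ) := by
        rw [Real.exp_nat_mul]
      have h3 : ((d - 1 : ℕ) : ℝ) * θ ≤ 1 := by
        have hle : ((d - 1 : ℕ) : ℝ) ≤ (n : ℝ) := by
          exact_mod_cast le_trans (Nat.sub_le d 1) hdn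
        have h4 : ((d - 1 : ℕ) : ℝ) * θ ≤ (n : ℝ) * θ :=
          mul_le_mul_of_nonneg_right hle hθ.le
        have h5 : (n : ℝ) * θ < 1 := by
          have := (lt_div_iff₀ hnR).mp hθn
          linarith
        linarith
      calc (1 + θ) ^ (d - 1) ≤ Real.exp (((d - 1 : ℕ) : ℝ) * θ) := by rw [← h2]; exact h1
        _ ≤ Real.exp 1 := Real.exp_le_exp.mpr h3
    have hP0' : 0 ≤ θ * (t.map (fun z => zd + θ - z)).prod := mul_nonneg hθ.le hP0
    rw [heval, hprodsplit]
    have step1 : J.leadingCoeff * (θ * (t.map (fun z => zd + θ - z)).prod)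
        ≤ (n.choose d : ℝ) * (θ * (1 + θ) ^ (d - 1)) := by
      apply mul_le_mul hleadle _ hP0' (by linarith)
      exact mul_le_mul_of_nonneg_left hPle hθ.le
    have step2 : (n.choose d : ℝ) * (θ * (1 + θ) ^ (d - 1))
        ≤ (n.choose d : ℝ) * (θ * Real.exp 1) := by
      apply mul_le_mul_of_nonneg_left _ (by linarith)
      exact mul_le_mul_of_nonneg_left hpow hθ.le
    have step3 : (n.choose d : ℝ) * (θ * Real.exp 1)
        ≤ (n.choose d : ℝ) * d * θ * Real.exp 1 := by
      have h0 : 0 ≤ (n.choose d : ℝ) * (θ * Real.exp 1) := by positivity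
      have : (n.choose d : ℝ) * d * θ * Real.exp 1
          = ((n.choose d : ℝ) * (θ * Real.exp 1)) * d := by ring
      rw [this]
      exact le_mul_of_one_le_right h0 hdR
    linarith
  refine ⟨part1, ?_⟩
  intro ε hε hεlt μ hμroot hμmax
  set K : ℝ := (n.choose d : ℝ) * d * Real.exp 1 with hKdef
  have hK : 0 < K := by
    have := Real.exp_pos 1
    apply mul_pos (mul_pos (by linarith) (by linarith)) this
  set θ := ε / K with hθdef
  have hθpos : 0 < θ := div_pos hε hK
  have hθn : θ < 1 / (n : ℝ) := by
    rw [hθdef, div_lt_div_iff₀ hK hnR]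
    rw [lt_div_iff₀ hnR] at hεlt
    linarith
  have h1 := part1 θ hθpos hθn
  have hKθ : K * θ = ε := by
    rw [hθdef]; field_simp
  have hevalle : (J - C ε).eval (zd + θ) ≤ 0 := by
    simp only [eval_sub, eval_C]
    have : (n.choose d : ℝ) * d * θ * Real.exp 1 = K * θ := by ring
    rw [this, hKθ] at h1
    linarith
  have hdegJ : 0 < J.degree := by
    rw [degree_eq_natDegree hJne, hdeg]
    exact_mod_cast hd
  have hdegC : (C ε).degree < J.degree := lt_of_le_of_lt (degree_C_le) hdegJ
  have hgdeg : (J - C ε).degree = J.degree := degree_sub_eq_left_of_degree_lt hdegC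
  have hglead : (J - C ε).leadingCoeff = J.leadingCoeff :=
    leadingCoeff_sub_of_degree_lt hdegC
  have htend : Filter.Tendsto (fun x => (J - C ε).eval x) Filter.atTop Filter.atTop := by
    apply Polynomial.tendsto_atTop_of_leadingCoeff_nonneg
    · rw [hgdeg]; exact hdegJ
    · rw [hglead]; exact hlead.le
  obtain ⟨b, hb1, hb2⟩ := ((htend.eventually_ge_atTop 0).and
    (Filter.eventually_ge_atTop (zd + θ))).exists
  have hcont : ContinuousOn (fun x => (J - C ε).eval x) (Set.Icc (zd + θ) b) :=
    ((J - C ε).continuous).continuousOn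
  have hmem : (0:ℝ) ∈ Set.Icc ((J - C ε).eval (zd + θ)) ((J - C ε).eval b) :=
    ⟨hevalle, hb1⟩
  obtain ⟨c, hc, hc0⟩ := intermediate_value_Icc hb2 hcont hmem
  have hcμ : c ≤ μ := hμmax c hc0
  have : zd + θ ≤ c := hc.1
  have : zd + ε / K ≤ μ := by rw [← hθdef]; linarith
  exact this
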